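/- In a Hamming graph G = ∏_{i=1}^t K_{n_i} with constant threshold 2: if x and y are vertices at Hamming distance 2, differing exactly in coordinates i and j (i ≠ j), and A, B ⊆ {1,…,t}, then the activation closure of x_A ∪ y_B equals x_{(A ∩ B) \ {i,j}}. -/

import Mathlib

/-- The Hamming graph `∏ K_{n i}`: vertices are tuples, adjacent iff they differ
in exactly one coordinate (Hamming distance 1). -/
def hammingGraph {t : ℕ} (n : Fin t → ℕ) : SimpleGraph (Π i, Fin (n i)) where
  Adj x y := hammingDist x y = 1
  symm := ⟨fun x y h => by try simp only at h ⊢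
                           rwa [hammingDist_comm]⟩
  loopless := ⟨fun x h => by simp [hammingDist_self] at h⟩

/-- The "subcube" `x_A`: all vertices agreeing with `x` on every coordinate in `A`. -/
def subcube {t : ℕ} {n : Fin t → ℕ} (x : Π i, Fin (n i)) (A : Set (Fin t)) :
    Set (Π i, Fin (n i)) :=
  {z | ∀ i ∈ A, z i = x i}

/-- A set `A` is closed under activation: every vertex with at least `θ v`
neighbors in `A` already belongs to `A`. -/
def activationClosed {V : Type*} [Fintype V] (G : SimpleGraph V) (θ : V → ℤ)
    (A : Set V) : Prop :=
  ∀ v : V, θ v ≤ ((A ∩ G.neighborSet v).ncard : ℤ) → v ∈ A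

/-- The activation closure `[S]_θ`: the smallest activation-closed superset of `S`. -/
def activationClosure {V : Type*} [Fintype V] (G : SimpleGraph V) (θ : V → ℤ)
    (S : Set V) : Set V :=
  ⋂₀ {A : Set V | S ⊆ A ∧ activationClosed G θ A}

section Aux
variable {t : ℕ} {n : Fin t → ℕ}

lemma hg_adj_iff {u v : Π i, Fin (n i)} :
    (hammingGraph n).Adj u v ↔ ∃ k, u k ≠ v k ∧ ∀ l, l ≠ k → u l = v l := by
  show (Finset.univ.filter fun k => u k ≠ v k).card = 1 ↔ _
  rw [Finset.card_eq_one]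
  constructor
  · rintro ⟨a, ha⟩
    refine ⟨a, ?_, ?_⟩
    · have : a ∈ Finset.univ.filter fun k => u k ≠ v k := by rw [ha]; simp
      simpa using this
    · intro l hl
      by_contra h
      have : l ∈ Finset.univ.filter fun k => u k ≠ v k := by simp [h]
      rw [ha] at this
      simp at this
      exact hl this
  · rintro ⟨k, hk, hl⟩
    refine ⟨k, ?_⟩
    ext l
    simp only [Finset.mem_filter, Finset.mem_univ, true_and, Finset.mem_singleton]
    constructor
    · intro h; by_contra hlk; exact h (hl l hlk)
    · rintro rfl; exact hk

lemma hg_two_neighbors {S : Set (Π i, Fin (n i))}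
    (hcl : activationClosed (hammingGraph n) (fun _ => (2:ℤ)) S)
    {v w1 w2 : Π i, Fin (n i)} (h1 : w1 ∈ S) (h2 : w2 ∈ S) (hne : w1 ≠ w2)
    (a1 : (hammingGraph n).Adj v w1) (a2 : (hammingGraph n).Adj v w2) : v ∈ S := by
  apply hcl v
  have : 1 < (S ∩ (hammingGraph n).neighborSet v).ncard :=
    (Set.one_lt_ncard_iff (Set.toFinite _)).mpr ⟨w1, w2, ⟨h1, a1⟩, ⟨h2, a2⟩, hne⟩
  show (2:ℤ) ≤ _
  exact_mod_cast this

lemma key {x y : Π i, Fin (n i)} {i j : Fin t} (hij : i ≠ j)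
    (hi : x i ≠ y i) (hj : x j ≠ y j) (hagree : ∀ k, k ≠ i → k ≠ j → x k = y k)
    (A B : Set (Fin t)) (S : Set (Π i, Fin (n i)))
    (hsub : subcube x A ∪ subcube y B ⊆ S)
    (hcl : activationClosed (hammingGraph n) (fun _ => (2:ℤ)) S) :
    subcube x ((A ∩ B) \ {i, j}) ⊆ S := by
  have hxS : x ∈ S := hsub (Or.inl fun k _ => rfl)
  have hyS : y ∈ S := hsub (Or.inr fun k _ => rfl)
  have hxy : x ≠ y := fun h => hi (congrFun h i)
  -- the two "midpoints"
  have hmS : Function.update x i (y i) ∈ S := by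
    apply hg_two_neighbors hcl hxS hyS hxy
    · exact hg_adj_iff.mpr ⟨i, by simpa using Ne.symm hi,
        fun l hl => by simp [Function.update_of_ne hl]⟩
    · refine hg_adj_iff.mpr ⟨j, ?_, ?_⟩
      · simpa [Function.update_of_ne (Ne.symm hij)] using hj
      · intro l hl
        by_cases hli : l = i
        · subst hli; simp
        · simp [Function.update_of_ne hli, hagree l hli hl]
  have hm'S : Function.update x j (y j) ∈ S := by
    apply hg_two_neighbors hcl hxS hyS hxy
    · exact hg_adj_iff.mpr ⟨j, by simpa using Ne.symm hj,
        fun l hl => by simp [Function.update_of_ne hl]⟩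
    · refine hg_adj_iff.mpr ⟨i, ?_, ?_⟩
      · simpa [Function.update_of_ne hij] using hi
      · intro l hl
        by_cases hlj : l = j
        · subst hlj; simp
        · simp [Function.update_of_ne hlj, hagree l hl hlj]
  intro z hz
  suffices H : ∀ d (z : Π i, Fin (n i)),
      (∀ k ∈ (A ∩ B) \ ({i, j} : Set (Fin t)), z k = x k) →
      (Finset.univ.filter fun k => z k ≠ x k).card = d → z ∈ S from H _ z hz rfl
  intro d
  induction d using Nat.strong_induction_on with
  | _ d IH =>
  intro z hz hd
  rcases d with _ | _ | d
  · -- d = 0 : z = x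
    have hzx : z = x := by
      funext l
      by_contra hl
      have : l ∈ Finset.univ.filter fun k => z k ≠ x k := by simp [hl]
      rw [Finset.card_eq_zero.mp hd] at this
      simp at this
    exact hzx ▸ hxS
  · -- d = 1
    obtain ⟨k, hk⟩ := Finset.card_eq_one.mp hd
    have hzk : z k ≠ x k := by
      have : k ∈ Finset.univ.filter fun l => z l ≠ x l := by
        rw [hk]; exact Finset.mem_singleton_self k
      simpa using this
    have hzl : ∀ l, l ≠ k → z l = x l := by
      intro l hl
      by_contra h
      have : l ∈ Finset.univ.filter fun l => z l ≠ x l := by simp [h]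
      rw [hk] at this
      exact hl (Finset.mem_singleton.mp this)
    have hkC : k ∉ (A ∩ B) \ ({i, j} : Set (Fin t)) := fun h => hzk (hz k h)
    by_cases hkA : k ∈ A
    · by_cases hki : k = i
      · subst hki
        by_cases hky : z k = y k
        · -- z = m
          have : z = Function.update x k (y k) := by
            funext l
            by_cases hlk : l = k
            · subst hlk; simp [hky]
            · simp [Function.update_of_ne hlk, hzl l hlk]
          exact this ▸ hmS
        · -- z i ∉ {x i, y i}
          have hwS : Function.update (Function.update x j (y j)) k (z k) ∈ S := by
            apply hg_two_neighbors hcl hyS hm'S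
              (fun h => hi (by simpa [Function.update_of_ne hij] using (congrFun h k).symm))
            · refine hg_adj_iff.mpr ⟨k, by simpa using hky, ?_⟩
              intro l hl
              by_cases hlj : l = j
              · rw [hlj, Function.update_of_ne (hlj ▸ hl)]; simp
              · simp [Function.update_of_ne hl, Function.update_of_ne hlj, hagree l hl hlj]
            · exact hg_adj_iff.mpr ⟨k, by simpa [Function.update_of_ne hij] using hzk,
                fun l hl => by simp [Function.update_of_ne hl]⟩
          apply hg_two_neighbors hcl hxS hwS
            (fun h => hj (by simpa [Function.update_of_ne (Ne.symm hij)] using congrFun h j))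
          · exact hg_adj_iff.mpr ⟨k, hzk, hzl⟩
          · refine hg_adj_iff.mpr ⟨j, ?_, ?_⟩
            · simpa [hzl j (Ne.symm hij), Function.update_of_ne (Ne.symm hij)] using hj
            · intro l hl
              by_cases hlk : l = k
              · subst hlk; simp
              · simp [Function.update_of_ne hlk, Function.update_of_ne hl, hzl l hlk]
      · by_cases hkj : k = j
        · subst hkj
          by_cases hky : z k = y k
          · have : z = Function.update x k (y k) := by
              funext l
              by_cases hlk : l = k
              · subst hlk; simp [hky]
              · simp [Function.update_of_ne hlk, hzl l hlk]
            exact this ▸ hm'S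
          · have hwS : Function.update (Function.update x i (y i)) k (z k) ∈ S := by
              apply hg_two_neighbors hcl hyS hmS
                (fun h => hj (by simpa [Function.update_of_ne (Ne.symm hij)] using (congrFun h k).symm))
              · refine hg_adj_iff.mpr ⟨k, by simpa using hky, ?_⟩
                intro l hl
                by_cases hli : l = i
                · rw [hli, Function.update_of_ne (hli ▸ hl)]; simp
                · simp [Function.update_of_ne hl, Function.update_of_ne hli, hagree l hli hl]
              · exact hg_adj_iff.mpr ⟨k, by simpa [Function.update_of_ne (Ne.symm hij)] using hzk,
                  fun l hl => by simp [Function.update_of_ne hl]⟩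
            apply hg_two_neighbors hcl hxS hwS
              (fun h => hi (by simpa [Function.update_of_ne hij] using congrFun h i))
            · exact hg_adj_iff.mpr ⟨k, hzk, hzl⟩
            · refine hg_adj_iff.mpr ⟨i, ?_, ?_⟩
              · simpa [hzl i hij, Function.update_of_ne hij] using hi
              · intro l hl
                by_cases hlk : l = k
                · subst hlk; simp
                · simp [Function.update_of_ne hlk, Function.update_of_ne hl, hzl l hlk]
        · -- k ∈ A, k ∉ B, k ≠ i, k ≠ j
          have hkB : k ∉ B := by
            intro hkB
            exact hkC ⟨⟨hkA, hkB⟩, by simp [hki, hkj]⟩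
          have hik : i ≠ k := fun e => hki e.symm
          have hjk : j ≠ k := fun e => hkj e.symm
          have wk : Function.update y k (z k) k = z k := Function.update_self _ _ _
          have wl : ∀ l, l ≠ k → Function.update y k (z k) l = y l :=
            fun l hl => Function.update_of_ne hl _ _
          have mK : Function.update x i (y i) k = x k := Function.update_of_ne hki _ _
          have m'K : Function.update x j (y j) k = x k := Function.update_of_ne hkj _ _
          have hwS : Function.update y k (z k) ∈ S := by
            apply hsub
            right
            intro l hl
            exact Function.update_of_ne (by rintro rfl; exact hkB hl) _ _
          have hpS : Function.update (Function.update y k (z k)) j (x j) ∈ S := by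
            apply hg_two_neighbors hcl hwS hmS ?_ ?_ ?_
            · intro h
              have h' := congrFun h k
              rw [wk, mK] at h'
              exact hzk h'
            · refine hg_adj_iff.mpr ⟨j, ?_, fun l hl => Function.update_of_ne hl _ _⟩
              rw [Function.update_self, wl j hjk]
              exact hj
            · refine hg_adj_iff.mpr ⟨k, ?_, ?_⟩
              · rw [Function.update_of_ne hkj, wk, mK]
                exact hzk
              · intro l hl
                by_cases hlj : l = j
                · rw [hlj, Function.update_self, Function.update_of_ne (Ne.symm hij)]
                · rw [Function.update_of_ne hlj, wl l hl]
                  by_cases hli : l = i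
                  · rw [hli, Function.update_self]
                  · rw [Function.update_of_ne hli]
                    exact (hagree l hli hlj).symm
          have hqS : Function.update (Function.update y k (z k)) i (x i) ∈ S := by
            apply hg_two_neighbors hcl hwS hm'S ?_ ?_ ?_
            · intro h
              have h' := congrFun h k
              rw [wk, m'K] at h'
              exact hzk h'
            · refine hg_adj_iff.mpr ⟨i, ?_, fun l hl => Function.update_of_ne hl _ _⟩
              rw [Function.update_self, wl i hik]
              exact hi
            · refine hg_adj_iff.mpr ⟨k, ?_, ?_⟩
              · rw [Function.update_of_ne hki, wk, m'K]
                exact hzk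
              · intro l hl
                by_cases hli : l = i
                · rw [hli, Function.update_self, Function.update_of_ne hij]
                · rw [Function.update_of_ne hli, wl l hl]
                  by_cases hlj : l = j
                  · rw [hlj, Function.update_self]
                  · rw [Function.update_of_ne hlj]
                    exact (hagree l hli hlj).symm
          apply hg_two_neighbors hcl hpS hqS ?_ ?_ ?_
          · intro h
            have h' := congrFun h i
            rw [Function.update_of_ne hij, wl i hik, Function.update_self] at h'
            exact hi h'.symm
          · refine hg_adj_iff.mpr ⟨i, ?_, ?_⟩
            · rw [Function.update_of_ne hij, wl i hik, hzl i hik]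
              exact hi
            · intro l hl
              by_cases hlj : l = j
              · rw [hlj, Function.update_self]
                exact hzl j hjk
              · rw [Function.update_of_ne hlj]
                by_cases hlk : l = k
                · rw [hlk, wk]
                · rw [wl l hlk, hzl l hlk]
                  exact hagree l hl hlj
          · refine hg_adj_iff.mpr ⟨j, ?_, ?_⟩
            · rw [Function.update_of_ne (Ne.symm hij), wl j hjk, hzl j hjk]
              exact hj
            · intro l hl
              by_cases hli : l = i
              · rw [hli, Function.update_self]
                exact hzl i hik
              · rw [Function.update_of_ne hli]
                by_cases hlk : l = k
                · rw [hlk, wk]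
                · rw [wl l hlk, hzl l hlk]
                  exact hagree l hli hl
    · -- k ∉ A : z ∈ subcube x A
      exact hsub (Or.inl fun l hl => hzl l (fun e => hkA (e ▸ hl)))
  · -- d ≥ 2
    have h2 : 1 < (Finset.univ.filter fun k => z k ≠ x k).card := by rw [hd]; omega
    obtain ⟨k, hk, k', hk', hkk'⟩ := Finset.one_lt_card.mp h2
    have hzk : z k ≠ x k := by simpa using hk
    have hzk' : z k' ≠ x k' := by simpa using hk'
    have step : ∀ a : Fin t, z a ≠ x a → Function.update z a (x a) ∈ S := by
      intro a ha
      apply IH (d+1) (by omega) _ ?_ ?_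
      · intro l hl
        by_cases hla : l = a
        · subst hla; simp
        · simp [Function.update_of_ne hla, hz l hl]
      · have heq : (Finset.univ.filter fun l => Function.update z a (x a) l ≠ x l)
            = (Finset.univ.filter fun l => z l ≠ x l).erase a := by
          ext l
          by_cases hla : l = a
          · subst hla; simp
          · simp [Function.update_of_ne hla, hla]
        rw [heq, Finset.card_erase_of_mem (by simp [ha]), hd]
        omega
    apply hg_two_neighbors hcl (step k hzk) (step k' hzk')
    · intro h
      have h' := congrFun h k
      rw [Function.update_self, Function.update_of_ne hkk'] at h'
      exact hzk h'.symm
    · refine hg_adj_iff.mpr ⟨k, ?_, fun l hl => by simp [Function.update_of_ne hl]⟩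
      simpa using hzk
    · refine hg_adj_iff.mpr ⟨k', ?_, fun l hl => by simp [Function.update_of_ne hl]⟩
      simpa using hzk'

lemma subcube_closed (x : Π i, Fin (n i)) (C : Set (Fin t)) :
    activationClosed (hammingGraph n) (fun _ => (2:ℤ)) (subcube x C) := by
  intro v hv
  by_contra h
  obtain ⟨k, hkC, hk⟩ : ∃ k ∈ C, v k ≠ x k := by
    simpa [subcube, not_forall] using h
  have hsub : subcube x C ∩ (hammingGraph n).neighborSet v ⊆ {Function.update v k (x k)} := by
    rintro w ⟨hw, hadj⟩
    obtain ⟨a, ha, hl⟩ := hg_adj_iff.mp hadj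
    have hwk : w k = x k := hw k hkC
    have hak : a = k := by
      by_contra hak
      exact hk ((hl k (fun e => hak e.symm)).trans hwk)
    subst hak
    have : w = Function.update v a (x a) := by
      funext l
      by_cases hla : l = a
      · subst hla; simp [hwk]
      · simp [Function.update_of_ne hla, (hl l hla).symm]
    simp [this]
  have : (subcube x C ∩ (hammingGraph n).neighborSet v).ncard ≤ 1 := by
    simpa using Set.ncard_le_ncard hsub (Set.finite_singleton _)
  have hv' : (2:ℤ) ≤ ((subcube x C ∩ (hammingGraph n).neighborSet v).ncard : ℤ) := hv
  omega

end Aux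

theorem closure_subcubes_dist_two {t : ℕ} (n : Fin t → ℕ) (hn : ∀ i, 2 ≤ n i)
    (x y : Π i, Fin (n i)) (i j : Fin t) (hij : i ≠ j)
    (hdist : hammingDist x y = 2)
    (hi : x i ≠ y i) (hj : x j ≠ y j) (hagree : ∀ k, k ≠ i → k ≠ j → x k = y k)
    (A B : Set (Fin t)) :
    activationClosure (hammingGraph n) (fun _ => (2 : ℤ))
      (subcube x A ∪ subcube y B) = subcube x ((A ∩ B) \ {i, j}) := by
  apply Set.Subset.antisymm
  · apply Set.sInter_subset_of_mem
    constructor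
    · rintro z (hzA | hzB) <;> intro k hk <;>
        simp only [Set.mem_diff, Set.mem_inter_iff, Set.mem_insert_iff,
          Set.mem_singleton_iff] at hk
      · exact hzA k hk.1.1
      · rw [hzB k hk.1.2]
        exact (hagree k (fun e => hk.2 (Or.inl e)) (fun e => hk.2 (Or.inr e))).symm
    · exact subcube_closed x _
  · intro z hz
    rw [activationClosure, Set.mem_sInter]
    rintro S ⟨hsub, hcl⟩
    exact key hij hi hj hagree A B S hsub hcl hz
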